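/- (Propositions 3.1 and 3.2: first derivative formula, stated without tensor products.) Let A be a unital C*-algebra over ℂ and let μ be a finite complex Borel measure on ℝ with ∫_ℝ (1 + |ξ|) d|μ|(ξ) < ∞. Then the map X ↦ f_μ(X), viewed as a map from the real Banach space A_* of self-adjoint elements of A to A, is Fréchet differentiable at every X ∈ A_*, and its derivative is given by df_μ(X)(Y) = ∫_0^1 ∫_ℝ iξ · exp(iαξX) · Y · exp(i(1−α)ξX) dμ(ξ) dα for every self-adjoint Y. -/

import Mathlib

open MeasureTheory

/-- `exp(i t X)` in a complex Banach algebra, for `t : ℝ`. -/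
noncomputable def uexp {A : Type*} [NormedRing A] [NormedAlgebra ℂ A]
    (t : ℝ) (X : A) : A :=
  NormedSpace.exp ((Complex.I * (t : ℂ)) • X)

/-- `f_μ(X) := ∫_ℝ exp(iξX) dμ(ξ)` (Bochner integral in `A`), for a finite complex
Borel measure `μ` on `ℝ` represented by its total variation `ν = |μ|` together with a
unimodular density `ρ` (so that `dμ = ρ dν`). -/
noncomputable def fmu {A : Type*} [NormedRing A] [NormedAlgebra ℂ A] [CompleteSpace A]
    (ν : Measure ℝ) (ρ : ℝ → ℂ) (X : A) : A :=
  ∫ ξ, ρ ξ • uexp ξ X ∂ν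

/-- The first-derivative formula
`df_μ(X)(Y) = ∫₀¹ ∫_ℝ iξ exp(iαξX) Y exp(i(1−α)ξX) dμ(ξ) dα`. -/
noncomputable def dfmu {A : Type*} [NormedRing A] [NormedAlgebra ℂ A] [CompleteSpace A]
    (ν : Measure ℝ) (ρ : ℝ → ℂ) (X Y : A) : A :=
  ∫ α in (0 : ℝ)..1,
    ∫ ξ, (ρ ξ * (ξ : ℂ) * Complex.I) •
      (uexp (α * ξ) X * Y * uexp ((1 - α) * ξ) X) ∂ν

section Aux

open Complex NormedSpace

variable {A : Type*} [CStarAlgebra A]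

lemma uexp_mem_unitary {X : A} (hX : IsSelfAdjoint X) (t : ℝ) : uexp t X ∈ unitary A := by
  let +nondep : NormedAlgebra ℚ A := .restrictScalars ℚ ℂ A
  apply exp_mem_unitary_of_mem_skewAdjoint
  rw [skewAdjoint.mem_iff, star_smul, hX.star_eq,
    show star (Complex.I * (t : ℂ)) = -(Complex.I * (t : ℂ)) by simp, neg_smul]

lemma norm_uexp_le {X : A} (hX : IsSelfAdjoint X) (t : ℝ) : ‖uexp t X‖ ≤ 1 := by
  rcases subsingleton_or_nontrivial A with h | h
  · simp [Subsingleton.elim (uexp t X) 0]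
  · exact le_of_eq (CStarRing.norm_of_mem_unitary (uexp_mem_unitary hX t))

lemma norm_triple_le {u v : A} (hu : ‖u‖ ≤ 1) (hv : ‖v‖ ≤ 1) (Y : A) : ‖u * Y * v‖ ≤ ‖Y‖ :=
  calc ‖u * Y * v‖ ≤ ‖u * Y‖ * ‖v‖ := norm_mul_le _ _
    _ ≤ (‖u‖ * ‖Y‖) * ‖v‖ := by gcongr; exact norm_mul_le _ _
    _ ≤ (1 * ‖Y‖) * 1 := by gcongr
    _ = ‖Y‖ := by ring

lemma continuous_uexp_comp {β : Type*} [TopologicalSpace β] {f : β → ℝ} (hf : Continuous f)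
    (X : A) : Continuous fun b => uexp (f b) X := by
  unfold uexp
  let +nondep : NormedAlgebra ℚ A := .restrictScalars ℚ ℂ A
  exact exp_continuous.comp
    ((continuous_const.mul (Complex.continuous_ofReal.comp hf)).smul continuous_const)

lemma hasDerivAt_uexp_mul (X : A) (t α : ℝ) :
    HasDerivAt (fun a : ℝ => uexp (a * t) X)
      ((Complex.I * (t : ℂ)) • (uexp (α * t) X * X)) α := by
  have hg : HasDerivAt (fun u : ℂ => exp (u • X))
      (exp ((Complex.I * (t : ℂ) * (α : ℂ)) • X) * X) (Complex.I * (t : ℂ) * (α : ℂ)) :=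
    hasDerivAt_exp_smul_const X _
  have hh : HasDerivAt (fun a : ℝ => Complex.I * (t : ℂ) * (a : ℂ))
      (Complex.I * (t : ℂ)) α := by
    simpa using ((hasDerivAt_id ((α : ℝ) : ℂ)).const_mul (Complex.I * (t : ℂ))).comp_ofReal
  have heq : (fun a : ℝ => uexp (a * t) X) =
      ((fun u : ℂ => exp (u • X)) ∘ fun a : ℝ => Complex.I * (t : ℂ) * (a : ℂ)) := by
    funext a
    simp only [uexp, Function.comp]
    congr 1
    push_cast
    ring
  have huexp : uexp (α * t) X = exp ((Complex.I * (t : ℂ) * (α : ℂ)) • X) := by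
    rw [uexp]
    congr 1
    push_cast
    ring
  rw [heq, huexp]
  exact hg.scomp α hh

lemma hasDerivAt_uexp_one_sub (X : A) (t α : ℝ) :
    HasDerivAt (fun a : ℝ => uexp ((1 - a) * t) X)
      (-((Complex.I * (t : ℂ)) • (uexp ((1 - α) * t) X * X))) α := by
  have h1 : HasDerivAt (fun a : ℝ => 1 - a) (-1 : ℝ) α := by
    simpa using (hasDerivAt_id α).const_sub (1 : ℝ)
  have := (hasDerivAt_uexp_mul X t (1 - α)).scomp α h1
  simpa [Function.comp_def] using this

lemma commute_uexp (X : A) (s : ℝ) : Commute X (uexp s X) :=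
  Commute.exp_right ((Commute.refl X).smul_right _)

lemma uexp_duhamel (X Y : A) (t : ℝ) :
    uexp t (X + Y) - uexp t X =
      ∫ a in (0 : ℝ)..1,
        (Complex.I * (t : ℂ)) • (uexp (a * t) (X + Y) * Y * uexp ((1 - a) * t) X) := by
  have hderiv : ∀ a ∈ Set.uIcc (0 : ℝ) 1,
      HasDerivAt (fun a : ℝ => uexp (a * t) (X + Y) * uexp ((1 - a) * t) X)
        ((Complex.I * (t : ℂ)) • (uexp (a * t) (X + Y) * Y * uexp ((1 - a) * t) X)) a := by
    intro a _
    have hE := hasDerivAt_uexp_mul (X + Y) t a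
    have hF := hasDerivAt_uexp_one_sub X t a
    have h := hE.mul hF
    convert h using 1
    · rfl
    have hc : uexp ((1 - a) * t) X * X = X * uexp ((1 - a) * t) X :=
      ((commute_uexp X ((1 - a) * t)).eq).symm
    rw [mul_neg, mul_smul_comm, smul_mul_assoc, hc, ← sub_eq_add_neg, ← smul_sub]
    congr 1
    noncomm_ring
  have hcont : Continuous fun a : ℝ =>
      (Complex.I * (t : ℂ)) • (uexp (a * t) (X + Y) * Y * uexp ((1 - a) * t) X) := by
    exact (((continuous_uexp_comp (continuous_id.mul continuous_const) (X + Y)).mul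
      continuous_const).mul
      (continuous_uexp_comp ((continuous_const.sub continuous_id).mul continuous_const)
        X)).const_smul _
  rw [intervalIntegral.integral_eq_sub_of_hasDerivAt hderiv (hcont.intervalIntegrable 0 1)]
  norm_num [uexp, NormedSpace.exp_zero]

lemma norm_uexp_sub_le {X Y : A} (hX : IsSelfAdjoint X) (hY : IsSelfAdjoint Y) (t : ℝ) :
    ‖uexp t (X + Y) - uexp t X‖ ≤ |t| * ‖Y‖ := by
  rw [uexp_duhamel]
  refine le_trans (intervalIntegral.norm_integral_le_of_norm_le_const (C := |t| * ‖Y‖) ?_)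
    (by norm_num)
  intro a _
  rw [norm_smul]
  have hnc : ‖Complex.I * (t : ℂ)‖ = |t| := by
    rw [norm_mul, Complex.norm_I, Complex.norm_real, Real.norm_eq_abs, one_mul]
  rw [hnc]
  exact mul_le_mul_of_nonneg_left
    (norm_triple_le (norm_uexp_le (hX.add hY) _) (norm_uexp_le hX _) Y) (abs_nonneg t)

lemma integrable_smul_uexp (ν : Measure ℝ) [IsFiniteMeasure ν] {ρ : ℝ → ℂ}
    (hρm : Measurable ρ) (hρ1 : ∀ ξ, ‖ρ ξ‖ = 1) {Z : A} (hZ : IsSelfAdjoint Z) :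
    Integrable (fun ξ => ρ ξ • uexp ξ Z) ν := by
  refine Integrable.mono' (integrable_const 1) ?_ (ae_of_all _ fun ξ => ?_)
  · exact hρm.aestronglyMeasurable.smul (continuous_uexp_comp continuous_id Z).aestronglyMeasurable
  · rw [norm_smul, hρ1, one_mul]
    exact norm_uexp_le hZ ξ

end Aux

/-- Propositions 3.1 and 3.2: first derivative formula. Let `A` be a
unital C*-algebra over `ℂ` and `μ` a finite complex Borel measure on `ℝ` (given by its
total variation `ν` and unimodular density `ρ`) with `∫ (1 + |ξ|) d|μ|(ξ) < ∞`. Then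
`X ↦ f_μ(X)`, as a map from the real Banach space of self-adjoint elements of `A` to
`A`, is Fréchet differentiable at every self-adjoint `X`, with derivative
`Y ↦ df_μ(X)(Y) = ∫₀¹ ∫_ℝ iξ exp(iαξX) Y exp(i(1−α)ξX) dμ(ξ) dα`
(Fréchet differentiability is spelled out as the first-order Taylor estimate along
self-adjoint directions). -/
theorem fmu_frechet_differentiable {A : Type*} [CStarAlgebra A]
    (ν : Measure ℝ) [IsFiniteMeasure ν]
    (ρ : ℝ → ℂ) (hρm : Measurable ρ) (hρ1 : ∀ ξ, ‖ρ ξ‖ = 1)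
    (hint : Integrable (fun ξ : ℝ => ξ) ν)
    (X : A) (hX : IsSelfAdjoint X) :
    ∀ ε > (0 : ℝ), ∃ δ > (0 : ℝ), ∀ Y : A, IsSelfAdjoint Y → ‖Y‖ ≤ δ →
      ‖fmu ν ρ (X + Y) - fmu ν ρ X - dfmu ν ρ X Y‖ ≤ ε * ‖Y‖ := by
  intro ε hε
  set g : ℕ → ℝ → ℝ := fun n ξ => |ξ| * min 2 (|ξ| * (1 / (n + 1))) with hgdef
  have hbound_int : Integrable (fun ξ : ℝ => 2 * |ξ|) ν := by
    simpa [Real.norm_eq_abs] using hint.norm.const_mul 2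
  have hgcont : ∀ n, Continuous (g n) := fun n =>
    continuous_abs.mul (continuous_const.min (continuous_abs.mul continuous_const))
  have htend : Filter.Tendsto (fun n : ℕ => ∫ ξ, g n ξ ∂ν) Filter.atTop (nhds 0) := by
    have h0 : (∫ _ξ : ℝ, (0 : ℝ) ∂ν) = 0 := integral_zero _ _
    rw [← h0]
    refine tendsto_integral_of_dominated_convergence (fun ξ => 2 * |ξ|)
      (fun n => (hgcont n).aestronglyMeasurable) hbound_int (fun n => ae_of_all _ fun ξ => ?_)
      (ae_of_all _ fun ξ => ?_)
    · rw [Real.norm_eq_abs, abs_of_nonneg (by positivity)]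
      have h1 : min 2 (|ξ| * (1 / (n + 1 : ℝ))) ≤ 2 := min_le_left _ _
      calc |ξ| * min 2 (|ξ| * (1 / (n + 1 : ℝ))) ≤ |ξ| * 2 :=
            mul_le_mul_of_nonneg_left h1 (abs_nonneg ξ)
        _ = 2 * |ξ| := mul_comm _ _
    · have h1 : Filter.Tendsto (fun n : ℕ => |ξ| * (1 / (n + 1 : ℝ))) Filter.atTop (nhds 0) := by
        simpa using tendsto_one_div_add_atTop_nhds_zero_nat.const_mul |ξ|
      have h2 : Filter.Tendsto (fun n : ℕ => min 2 (|ξ| * (1 / (n + 1 : ℝ)))) Filter.atTop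
          (nhds (min 2 0)) := (tendsto_const_nhds).min h1
      have h3 : Filter.Tendsto (fun n : ℕ => |ξ| * min 2 (|ξ| * (1 / (n + 1 : ℝ))))
          Filter.atTop (nhds (|ξ| * min 2 0)) := (tendsto_const_nhds (x := |ξ|)).mul h2
      have h4 : |ξ| * min 2 0 = 0 := by norm_num
      rw [h4] at h3
      exact h3
  obtain ⟨n, hn⟩ := (htend.eventually_lt_const hε).exists
  set δ : ℝ := 1 / (n + 1 : ℝ) with hδdef
  have hδpos : 0 < δ := by positivity
  refine ⟨δ, hδpos, ?_⟩
  intro Y hY hYδ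
  have hXY : IsSelfAdjoint (X + Y) := hX.add hY
  set c : ℝ → ℂ := fun ξ => ρ ξ * (ξ : ℂ) * Complex.I with hcdef
  have hcnorm : ∀ ξ, ‖c ξ‖ = |ξ| := fun ξ => by
    rw [hcdef]
    simp only [norm_mul, hρ1, Complex.norm_I, Complex.norm_real, Real.norm_eq_abs,
      one_mul, mul_one]
  set f1 : ℝ → A := fun ξ => ρ ξ • uexp ξ (X + Y) with hf1def
  set f2 : ℝ → A := fun ξ => ρ ξ • uexp ξ X with hf2def
  have hf1int : Integrable f1 ν := integrable_smul_uexp ν hρm hρ1 hXY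
  have hf2int : Integrable f2 ν := integrable_smul_uexp ν hρm hρ1 hX
  -- Fubini for dfmu
  set μ0 : Measure ℝ := volume.restrict (Set.Ioc (0 : ℝ) 1) with hμ0
  set G : ℝ × ℝ → A := fun p =>
    c p.2 • (uexp (p.1 * p.2) X * Y * uexp ((1 - p.1) * p.2) X) with hGdef
  have hGmeas : AEStronglyMeasurable G (μ0.prod ν) := by
    refine AEStronglyMeasurable.smul ?_ ?_
    · exact (((hρm.comp measurable_snd).mul
        (Complex.measurable_ofReal.comp measurable_snd)).mul
        measurable_const).aestronglyMeasurable
    · exact (((continuous_uexp_comp (continuous_fst.mul continuous_snd) X).mul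
        continuous_const).mul
        (continuous_uexp_comp ((continuous_const.sub continuous_fst).mul continuous_snd)
          X)).aestronglyMeasurable
  have hGbound : ∀ p : ℝ × ℝ, ‖G p‖ ≤ ‖Y‖ * |p.2| := by
    intro p
    rw [hGdef, norm_smul, hcnorm]
    calc |p.2| * ‖uexp (p.1 * p.2) X * Y * uexp ((1 - p.1) * p.2) X‖
        ≤ |p.2| * ‖Y‖ := mul_le_mul_of_nonneg_left
          (norm_triple_le (norm_uexp_le hX _) (norm_uexp_le hX _) Y) (abs_nonneg _)
      _ = ‖Y‖ * |p.2| := mul_comm _ _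
  have hB : Integrable (fun p : ℝ × ℝ => ‖Y‖ * |p.2|) (μ0.prod ν) := by
    have h1 : Integrable (fun ξ : ℝ => ‖Y‖ * |ξ|) ν := by
      simpa [Real.norm_eq_abs] using hint.norm.const_mul ‖Y‖
    have hmap : Measure.map Prod.snd (μ0.prod ν) = ν := by
      rw [Measure.map_snd_prod]
      simp [hμ0, Real.volume_Ioc]
    have h2 : Integrable (fun ξ : ℝ => ‖Y‖ * |ξ|) (Measure.map Prod.snd (μ0.prod ν)) := by
      rwa [hmap]
    exact h2.comp_measurable measurable_snd
  have hGint : Integrable G (μ0.prod ν) := hB.mono' hGmeas (ae_of_all _ hGbound)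
  set K : ℝ → A := fun ξ => ∫ a, G (a, ξ) ∂μ0 with hKdef
  have hswap : dfmu ν ρ X Y = ∫ ξ, K ξ ∂ν := by
    rw [dfmu, intervalIntegral.integral_of_le zero_le_one]
    exact MeasureTheory.integral_integral_swap (f := fun a ξ => G (a, ξ)) (μ := μ0) (ν := ν) hGint
  have hKint : Integrable K ν := hGint.integral_prod_right
  have key : fmu ν ρ (X + Y) - fmu ν ρ X - dfmu ν ρ X Y = ∫ ξ, (f1 ξ - f2 ξ - K ξ) ∂ν := by
    rw [fmu, fmu, hswap, ← integral_sub hf1int hf2int, ← integral_sub (f := fun ξ => f1 ξ - f2 ξ) (hf1int.sub hf2int) hKint]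
  rw [key]
  have hpt : ∀ ξ, ‖f1 ξ - f2 ξ - K ξ‖ ≤ g n ξ * ‖Y‖ := by
    intro ξ
    have hcont1 : Continuous fun a : ℝ =>
        c ξ • (uexp (a * ξ) (X + Y) * Y * uexp ((1 - a) * ξ) X) :=
      (((continuous_uexp_comp (continuous_id.mul continuous_const) (X + Y)).mul
        continuous_const).mul
        (continuous_uexp_comp ((continuous_const.sub continuous_id).mul continuous_const)
          X)).const_smul _
    have hcont2 : Continuous fun a : ℝ =>
        c ξ • (uexp (a * ξ) X * Y * uexp ((1 - a) * ξ) X) :=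
      (((continuous_uexp_comp (continuous_id.mul continuous_const) X).mul
        continuous_const).mul
        (continuous_uexp_comp ((continuous_const.sub continuous_id).mul continuous_const)
          X)).const_smul _
    have hL : f1 ξ - f2 ξ =
        ∫ a in (0 : ℝ)..1, c ξ • (uexp (a * ξ) (X + Y) * Y * uexp ((1 - a) * ξ) X) := by
      calc f1 ξ - f2 ξ = ρ ξ • (uexp ξ (X + Y) - uexp ξ X) := (smul_sub _ _ _).symm
        _ = ρ ξ • ∫ a in (0 : ℝ)..1,
            (Complex.I * (ξ : ℂ)) • (uexp (a * ξ) (X + Y) * Y * uexp ((1 - a) * ξ) X) := by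
          rw [uexp_duhamel]
        _ = ∫ a in (0 : ℝ)..1,
            ρ ξ • ((Complex.I * (ξ : ℂ)) •
              (uexp (a * ξ) (X + Y) * Y * uexp ((1 - a) * ξ) X)) :=
          (intervalIntegral.integral_smul (ρ ξ) fun a =>
            (Complex.I * (ξ : ℂ)) • (uexp (a * ξ) (X + Y) * Y * uexp ((1 - a) * ξ) X)).symm
        _ = ∫ a in (0 : ℝ)..1,
            c ξ • (uexp (a * ξ) (X + Y) * Y * uexp ((1 - a) * ξ) X) := by
          refine intervalIntegral.integral_congr fun a _ => ?_
          rw [smul_smul, hcdef]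
          congr 1
          ring
    have hKeq : K ξ =
        ∫ a in (0 : ℝ)..1, c ξ • (uexp (a * ξ) X * Y * uexp ((1 - a) * ξ) X) :=
      (intervalIntegral.integral_of_le zero_le_one).symm
    rw [hL, hKeq, ← intervalIntegral.integral_sub (hcont1.intervalIntegrable 0 1)
      (hcont2.intervalIntegrable 0 1)]
    refine le_trans (intervalIntegral.norm_integral_le_of_norm_le_const
      (C := g n ξ * ‖Y‖) ?_) (by norm_num)
    intro a ha
    have ha' : a ∈ Set.Ioc (0 : ℝ) 1 := by rwa [Set.uIoc_of_le zero_le_one] at ha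
    rw [← smul_sub, ← sub_mul, ← sub_mul, norm_smul, hcnorm]
    have hEE : ‖uexp (a * ξ) (X + Y) - uexp (a * ξ) X‖ ≤ min 2 (|ξ| * ‖Y‖) := by
      refine le_min ?_ ?_
      · calc ‖uexp (a * ξ) (X + Y) - uexp (a * ξ) X‖
            ≤ ‖uexp (a * ξ) (X + Y)‖ + ‖uexp (a * ξ) X‖ := norm_sub_le _ _
          _ ≤ 1 + 1 := add_le_add (norm_uexp_le hXY _) (norm_uexp_le hX _)
          _ = 2 := by norm_num
      · calc ‖uexp (a * ξ) (X + Y) - uexp (a * ξ) X‖ ≤ |a * ξ| * ‖Y‖ :=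
            norm_uexp_sub_le hX hY (a * ξ)
          _ = |a| * |ξ| * ‖Y‖ := by rw [abs_mul]
          _ ≤ 1 * |ξ| * ‖Y‖ := by
            gcongr
            exact abs_le.2 ⟨by linarith [ha'.1], ha'.2⟩
          _ = |ξ| * ‖Y‖ := by ring
    have hmin : min 2 (|ξ| * ‖Y‖) ≤ min 2 (|ξ| * δ) := by
      exact min_le_min le_rfl (mul_le_mul_of_nonneg_left hYδ (abs_nonneg ξ))
    have h5 : ‖(uexp (a * ξ) (X + Y) - uexp (a * ξ) X) * Y * uexp ((1 - a) * ξ) X‖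
        ≤ min 2 (|ξ| * δ) * ‖Y‖ := by
      calc ‖(uexp (a * ξ) (X + Y) - uexp (a * ξ) X) * Y * uexp ((1 - a) * ξ) X‖
          ≤ ‖(uexp (a * ξ) (X + Y) - uexp (a * ξ) X) * Y‖ * ‖uexp ((1 - a) * ξ) X‖ :=
            norm_mul_le _ _
        _ ≤ ‖(uexp (a * ξ) (X + Y) - uexp (a * ξ) X) * Y‖ * 1 :=
            mul_le_mul_of_nonneg_left (norm_uexp_le hX _) (norm_nonneg _)
        _ = ‖(uexp (a * ξ) (X + Y) - uexp (a * ξ) X) * Y‖ := mul_one _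
        _ ≤ ‖uexp (a * ξ) (X + Y) - uexp (a * ξ) X‖ * ‖Y‖ := norm_mul_le _ _
        _ ≤ min 2 (|ξ| * δ) * ‖Y‖ :=
            mul_le_mul_of_nonneg_right (hEE.trans hmin) (norm_nonneg Y)
    calc |ξ| * ‖(uexp (a * ξ) (X + Y) - uexp (a * ξ) X) * Y * uexp ((1 - a) * ξ) X‖
        ≤ |ξ| * (min 2 (|ξ| * δ) * ‖Y‖) := mul_le_mul_of_nonneg_left h5 (abs_nonneg ξ)
      _ = g n ξ * ‖Y‖ := by simp only [hgdef, hδdef]; ring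
  have hgnint : Integrable (fun ξ => g n ξ * ‖Y‖) ν := by
    refine Integrable.mul_const ?_ _
    refine hbound_int.mono' (hgcont n).aestronglyMeasurable (ae_of_all _ fun ξ => ?_)
    rw [Real.norm_eq_abs, abs_of_nonneg (by positivity)]
    have h1 : min 2 (|ξ| * (1 / (n + 1 : ℝ))) ≤ 2 := min_le_left _ _
    calc |ξ| * min 2 (|ξ| * (1 / (n + 1 : ℝ))) ≤ |ξ| * 2 :=
          mul_le_mul_of_nonneg_left h1 (abs_nonneg ξ)
      _ = 2 * |ξ| := mul_comm _ _
  calc ‖∫ ξ, (f1 ξ - f2 ξ - K ξ) ∂ν‖ ≤ ∫ ξ, ‖f1 ξ - f2 ξ - K ξ‖ ∂ν :=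
      norm_integral_le_integral_norm _
    _ ≤ ∫ ξ, g n ξ * ‖Y‖ ∂ν :=
      integral_mono ((hf1int.sub hf2int).sub hKint).norm hgnint hpt
    _ = (∫ ξ, g n ξ ∂ν) * ‖Y‖ := by rw [integral_mul_const]
    _ ≤ ε * ‖Y‖ := mul_le_mul_of_nonneg_right hn.le (norm_nonneg Y)
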